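/- arXiv:1204.1308 — 4 statements merged into one kernel-verified Lean document; each statement's English description precedes it below -/
import Mathlib

section
/- Let n ≥ 1 and let P be a convex body in ℝⁿ contained in the positive octant [0,∞)ⁿ whose barycenter is the point (1,1,...,1). Then Vol(P) ≤ (n+1)ⁿ/n!, where Vol denotes Lebesgue measure. (The bound is attained by (n+1) times the unit simplex.) -/
open MeasureTheory

/-- The scaled simplex in the positive octant. -/
def Spx (n : ℕ) (a : ℝ) : Set (Fin n → ℝ) := {x | (∀ i, 0 ≤ x i) ∧ ∑ i, x i ≤ a}

lemma spx_isClosed (n : ℕ) (a : ℝ) : IsClosed (Spx n a) := by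
  have h : Spx n a = (⋂ i, {x : Fin n → ℝ | 0 ≤ x i}) ∩ {x | ∑ i, x i ≤ a} := by
    ext x; simp [Spx, Set.mem_iInter]
  rw [h]
  exact ((isClosed_iInter fun i => isClosed_le continuous_const (continuous_apply i)).inter
    (isClosed_le (continuous_finset_sum _ fun i _ => continuous_apply i) continuous_const))

lemma spx_subset_Icc (n : ℕ) (a : ℝ) :
    Spx n a ⊆ Set.Icc (fun _ => (0:ℝ)) (fun _ => max a 0) := by
  rintro x ⟨h0, hs⟩
  constructor
  · intro i; exact h0 i
  · intro i
    have : x i ≤ ∑ j, x j :=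
      Finset.single_le_sum (fun j _ => h0 j) (Finset.mem_univ i)
    exact le_max_of_le_left (this.trans hs)

lemma spx_isCompact (n : ℕ) (a : ℝ) : IsCompact (Spx n a) :=
  (isCompact_Icc).of_isClosed_subset (spx_isClosed n a) (spx_subset_Icc n a)

lemma spx_empty {n : ℕ} {a : ℝ} (ha : a < 0) : Spx n a = ∅ := by
  ext x
  simp only [Spx, Set.mem_setOf_eq, Set.mem_empty_iff_false, iff_false, not_and]
  intro h0 hs
  have : (0:ℝ) ≤ ∑ i, x i := Finset.sum_nonneg fun i _ => h0 i
  linarith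

lemma integral_aux (n : ℕ) {a : ℝ} (ha : 0 ≤ a) :
    ∫ t in Set.Ioc 0 a, ((a - t) ^ n / n.factorial) =
      a ^ (n + 1) / (n + 1).factorial := by
  rw [← intervalIntegral.integral_of_le ha]
  have h1 : ∫ t in (0:ℝ)..a, ((a - t) ^ n / n.factorial) =
      (∫ t in (0:ℝ)..a, (a - t) ^ n) / n.factorial := by
    rw [intervalIntegral.integral_div]
  rw [h1]
  have h2 : (∫ t in (0:ℝ)..a, (a - t) ^ n) = ∫ t in (0:ℝ)..a, t ^ n := by
    have := intervalIntegral.integral_comp_sub_left (a := (0:ℝ)) (b := a)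
      (fun t => t ^ n) a
    simpa using this
  rw [h2, integral_pow]
  have hf : ((n+1).factorial : ℝ) = (n+1) * (n.factorial : ℝ) := by
    push_cast [Nat.factorial_succ]; ring
  rw [hf]
  have h3 : (n.factorial : ℝ) ≠ 0 := by positivity
  have h4 : ((n:ℝ) + 1) ≠ 0 := by positivity
  field_simp
  simp

lemma spx_volume : ∀ (n : ℕ) {a : ℝ}, 0 ≤ a →
    volume (Spx n a) = ENNReal.ofReal (a ^ n / n.factorial) := by
  intro n
  induction n with
  | zero =>
    intro a ha
    have h : Spx 0 a = Set.univ := by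
      ext x
      simp [Spx, ha]
    rw [h]
    have h1 : (volume : Measure (Fin 0 → ℝ)) Set.univ = 1 := by
      rw [MeasureTheory.volume_pi, Measure.pi_univ]
      simp
    simp [h1]
  | succ n ih =>
    intro a ha
    set A : Set (ℝ × (Fin n → ℝ)) :=
      {p | 0 ≤ p.1 ∧ (∀ i, 0 ≤ p.2 i) ∧ p.1 + ∑ i, p.2 i ≤ a} with hAdef
    have hAclosed : IsClosed A := by
      have h : A = {p : ℝ × (Fin n → ℝ) | 0 ≤ p.1} ∩
          ((⋂ i, {p : ℝ × (Fin n → ℝ) | 0 ≤ p.2 i}) ∩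
            {p : ℝ × (Fin n → ℝ) | p.1 + ∑ i, p.2 i ≤ a}) := by
        ext p; simp [hAdef, Set.mem_iInter]
      rw [h]
      exact (isClosed_le continuous_const continuous_fst).inter
        ((isClosed_iInter fun i => isClosed_le continuous_const
            ((continuous_apply i).comp continuous_snd)).inter
          (isClosed_le (continuous_fst.add
            (continuous_finset_sum _ fun i _ => (continuous_apply i).comp continuous_snd))
            continuous_const))
    have hA : MeasurableSet A := hAclosed.measurableSet
    have hpre : Spx (n+1) a =
        (MeasurableEquiv.piFinSuccAbove (fun _ : Fin (n+1) => ℝ) 0) ⁻¹' A := by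
      ext x
      simp only [Spx, Set.mem_setOf_eq, Set.mem_preimage,
        MeasurableEquiv.piFinSuccAbove_apply, hAdef, Fin.zero_succAbove]
      rw [Fin.sum_univ_succ]
      constructor
      · rintro ⟨h0, hs⟩
        exact ⟨h0 0, fun i => h0 i.succ, hs⟩
      · rintro ⟨h0, h1, hs⟩
        refine ⟨fun i => ?_, hs⟩
        rcases Fin.eq_zero_or_eq_succ i with rfl | ⟨j, rfl⟩
        · exact h0
        · exact h1 j
    have hslice : ∀ t : ℝ, volume (Prod.mk t ⁻¹' A) =
        Set.indicator (Set.Icc 0 a)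
          (fun u => ENNReal.ofReal ((a - u) ^ n / n.factorial)) t := by
      intro t
      by_cases ht : t ∈ Set.Icc 0 a
      · have h : Prod.mk t ⁻¹' A = Spx n (a - t) := by
          ext x
          simp only [Set.mem_preimage, hAdef, Set.mem_setOf_eq, Spx]
          constructor
          · rintro ⟨-, h1, h2⟩; exact ⟨h1, by linarith⟩
          · rintro ⟨h1, h2⟩; exact ⟨ht.1, h1, by linarith⟩
        rw [h, ih (by linarith [ht.2]), Set.indicator_of_mem ht]
      · have h : Prod.mk t ⁻¹' A = ∅ := by
          ext x
          simp only [Set.mem_preimage, hAdef, Set.mem_setOf_eq,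
            Set.mem_empty_iff_false, iff_false, not_and]
          intro h0 h1 
          intro h2
          apply ht
          have : (0:ℝ) ≤ ∑ i, x i := Finset.sum_nonneg fun i _ => h1 i
          exact ⟨h0, by linarith⟩
        rw [h, measure_empty, Set.indicator_of_notMem ht]
    calc volume (Spx (n+1) a) = volume A := by
          rw [hpre]
          exact (volume_preserving_piFinSuccAbove (fun _ : Fin (n+1) => ℝ) 0).measure_preimage
            hA.nullMeasurableSet
      _ = ∫⁻ t, volume (Prod.mk t ⁻¹' A) := by
          rw [Measure.volume_eq_prod, Measure.prod_apply hA]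
          
      _ = ∫⁻ t in Set.Icc 0 a, ENNReal.ofReal ((a - t) ^ n / n.factorial) := by
          simp_rw [hslice]
          rw [lintegral_indicator measurableSet_Icc]
      _ = ENNReal.ofReal (∫ t in Set.Icc 0 a, ((a - t) ^ n / n.factorial)) := by
          rw [← ofReal_integral_eq_lintegral_ofReal]
          · exact (Continuous.integrableOn_Icc (by fun_prop))
          · filter_upwards [ae_restrict_mem measurableSet_Icc] with t ht
            have : 0 ≤ a - t := by linarith [ht.2]
            positivity
      _ = ENNReal.ofReal (a ^ (n+1) / (n+1).factorial) := by
          rw [MeasureTheory.integral_Icc_eq_integral_Ioc, integral_aux n ha]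

lemma spx_moment (n : ℕ) {a : ℝ} (ha : 0 ≤ a) :
    ∫ x in Spx n a, (a - ∑ i, x i) = a ^ (n + 1) / (n + 1).factorial := by
  have hSm : MeasurableSet (Spx n a) := (spx_isClosed n a).measurableSet
  have hcont : Continuous (fun x : Fin n → ℝ => a - ∑ i, x i) := by fun_prop
  have hnn : 0 ≤ᵐ[volume.restrict (Spx n a)] fun x : Fin n → ℝ => a - ∑ i, x i := by
    filter_upwards [ae_restrict_mem hSm] with x hx
    have h2 := hx.2
    show (0:ℝ) ≤ a - ∑ i, x i
    linarith
  rw [integral_eq_lintegral_of_nonneg_ae hnn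
    (hcont.aestronglyMeasurable.restrict)]
  have key : ∫⁻ x in Spx n a, ENNReal.ofReal (a - ∑ i, x i) =
      ENNReal.ofReal (a ^ (n + 1) / (n + 1).factorial) := by
    rw [lintegral_eq_lintegral_meas_le _ hnn hcont.aemeasurable.restrict]
    have hmeas : ∀ t : ℝ, MeasurableSet {x : Fin n → ℝ | t ≤ a - ∑ i, x i} :=
      fun t => (isClosed_le continuous_const (by fun_prop)).measurableSet
    have hval : ∀ t ∈ Set.Ioi (0:ℝ),
        (volume.restrict (Spx n a)) {x : Fin n → ℝ | t ≤ a - ∑ i, x i} =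
          Set.indicator (Set.Icc 0 a)
            (fun u => ENNReal.ofReal ((a - u) ^ n / n.factorial)) t := by
      intro t ht
      rw [Measure.restrict_apply (hmeas t)]
      have hset : {x : Fin n → ℝ | t ≤ a - ∑ i, x i} ∩ Spx n a = Spx n (a - t) := by
        ext x
        simp only [Set.mem_inter_iff, Set.mem_setOf_eq, Spx]
        constructor
        · rintro ⟨h1, h2, h3⟩
          exact ⟨h2, by linarith⟩
        · rintro ⟨h1, h2⟩
          have ht' := le_of_lt (Set.mem_Ioi.1 ht)
          exact ⟨by linarith, h1, by linarith⟩
      rw [hset]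
      by_cases hta : t ≤ a
      · rw [spx_volume n (by linarith), Set.indicator_of_mem (Set.mem_Icc.2 ⟨le_of_lt (Set.mem_Ioi.1 ht), hta⟩)]
      · rw [spx_empty (by linarith), measure_empty,
          Set.indicator_of_notMem (fun h => hta h.2)]
    rw [setLIntegral_congr_fun measurableSet_Ioi hval]
    rw [lintegral_indicator measurableSet_Icc, Measure.restrict_restrict measurableSet_Icc]
    have : Set.Icc (0:ℝ) a ∩ Set.Ioi 0 = Set.Ioc 0 a := by
      ext t; simp only [Set.mem_inter_iff, Set.mem_Icc, Set.mem_Ioi, Set.mem_Ioc]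
      constructor
      · rintro ⟨⟨h1, h2⟩, h3⟩; exact ⟨h3, h2⟩
      · rintro ⟨h1, h2⟩; exact ⟨⟨le_of_lt h1, h2⟩, h1⟩
    rw [this, ← ofReal_integral_eq_lintegral_ofReal]
    · rw [integral_aux n ha]
    · exact (Continuous.integrableOn_Ioc (by fun_prop))
    · filter_upwards [ae_restrict_mem measurableSet_Ioc] with t ht
      have : 0 ≤ a - t := by linarith [ht.2]
      positivity
  rw [key, ENNReal.toReal_ofReal (by positivity)]


/-- A convex body `P` in `ℝⁿ` (`n ≥ 1`) contained in the positive
octant whose barycenter is `(1,…,1)` has volume at most `(n+1)ⁿ/n!`. -/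
theorem volume_le_of_barycenter_one (n : ℕ) (hn : 1 ≤ n) (P : Set (Fin n → ℝ))
    (hconv : Convex ℝ P) (hcomp : IsCompact P) (hint : (interior P).Nonempty)
    (hoct : ∀ x ∈ P, ∀ i, 0 ≤ x i)
    (hbar : ∫ x in P, x = (volume P).toReal • (fun _ => (1 : ℝ))) :
    (volume P).toReal ≤ ((n : ℝ) + 1) ^ n / (n.factorial : ℝ) := by
  classical
  set a : ℝ := (n : ℝ) + 1 with ha_def
  have ha : 0 ≤ a := by positivity
  set S : Set (Fin n → ℝ) := Spx n a with hS_def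
  have hPm : MeasurableSet P := hcomp.isClosed.measurableSet
  have hSm : MeasurableSet S := (spx_isClosed n a).measurableSet
  have hScomp : IsCompact S := spx_isCompact n a
  set V : ℝ := (volume P).toReal with hV_def
  set W : ℝ := (volume S).toReal with hW_def
  have hvolS : W = a ^ n / n.factorial := by
    rw [hW_def, hS_def, spx_volume n ha, ENNReal.toReal_ofReal (by positivity)]
  -- integrability facts
  have hsum_cont : Continuous (fun x : Fin n → ℝ => ∑ i, x i) := by fun_prop
  have hiP : IntegrableOn (fun x : Fin n → ℝ => ∑ i, x i) P :=
    hsum_cont.continuousOn.integrableOn_compact hcomp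
  have hiS : IntegrableOn (fun x : Fin n → ℝ => ∑ i, x i) S :=
    hsum_cont.continuousOn.integrableOn_compact hScomp
  have hVfin : volume P ≠ ⊤ := hcomp.measure_lt_top.ne
  have hWfin : volume S ≠ ⊤ := hScomp.measure_lt_top.ne
  have hid_int : IntegrableOn (fun x : Fin n → ℝ => x) P :=
    continuous_id.continuousOn.integrableOn_compact hcomp
  -- coordinates of the barycenter
  have hcoord : ∀ i : Fin n, ∫ x in P, x i = V := by
    intro i
    have hL := (ContinuousLinearMap.proj i :
        (Fin n → ℝ) →L[ℝ] ℝ).integral_comp_comm hid_int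
    have : ∫ x in P, x i = (∫ x in P, x) i := by
      simpa [ContinuousLinearMap.proj_apply] using hL
    rw [this, hbar]
    simp
  -- the first moments
  have hmomP : ∫ x in P, ∑ i, x i = n * V := by
    rw [MeasureTheory.integral_finset_sum _ (fun i _ =>
      ((continuous_apply i).continuousOn.integrableOn_compact hcomp))]
    simp [hcoord, Finset.card_univ, mul_comm]
  have hmomS : ∫ x in S, ∑ i, x i = n * W := by
    have h1 : ∫ x in S, (a - ∑ i, x i) = a ^ (n + 1) / (n + 1).factorial :=
      spx_moment n ha
    have h2 : ∫ x in S, (a - ∑ i, x i) = a * W - ∫ x in S, ∑ i, x i := by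
      rw [integral_sub (integrableOn_const (C := a) hScomp.measure_lt_top.ne) hiS]
      rw [setIntegral_const]
      simp [smul_eq_mul, mul_comm, Measure.real, hV_def, hW_def]
    have hfact : ((n + 1).factorial : ℝ) = a * (n.factorial : ℝ) := by
      simp only [Nat.factorial_succ, ha_def]; push_cast; ring
    have hF : (n.factorial : ℝ) ≠ 0 := by positivity
    have haa : a ≠ 0 := by positivity
    have h3 : ∫ x in S, ∑ i, x i = a * W - a ^ (n + 1) / (n + 1).factorial := by
      rw [h1] at h2
      linarith
    rw [h3, hvolS, hfact, ha_def]
    field_simp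
    ring
  -- the key pointwise inequality
  set g : (Fin n → ℝ) → ℝ := fun x => (∑ i, x i) - a with hg_def
  have hgP : IntegrableOn g P := hiP.sub (integrableOn_const (C := a) hcomp.measure_lt_top.ne)
  have hgS : IntegrableOn g S := hiS.sub (integrableOn_const (C := a) hScomp.measure_lt_top.ne)
  have hnonneg : ∀ x : Fin n → ℝ,
      0 ≤ Set.indicator P g x - Set.indicator S g x := by
    intro x
    by_cases hxP : x ∈ P <;> by_cases hxS : x ∈ S
    · simp [Set.indicator_of_mem, hxP, hxS]
    · rw [Set.indicator_of_mem hxP, Set.indicator_of_notMem hxS, sub_zero]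
      have hx0 : ∀ i, 0 ≤ x i := hoct x hxP
      have : ¬ (∑ i, x i ≤ a) := fun h => hxS ⟨hx0, h⟩
      rw [hg_def]
      simp only []
      linarith [not_le.1 this]
    · rw [Set.indicator_of_notMem hxP, Set.indicator_of_mem hxS, zero_sub]
      have : ∑ i, x i ≤ a := hxS.2
      rw [hg_def]
      simp only []
      linarith
    · simp [Set.indicator_of_notMem, hxP, hxS]
  have hkey : 0 ≤ ∫ x, (Set.indicator P g x - Set.indicator S g x) :=
    integral_nonneg hnonneg
  rw [integral_sub ((integrable_indicator_iff hPm).2 hgP)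
    ((integrable_indicator_iff hSm).2 hgS),
    integral_indicator hPm, integral_indicator hSm] at hkey
  have hintP : ∫ x in P, g x = n * V - a * V := by
    rw [hg_def]
    rw [integral_sub hiP (integrableOn_const (C := a) hcomp.measure_lt_top.ne)]
    rw [hmomP, setIntegral_const]
    simp [smul_eq_mul, mul_comm, Measure.real, hV_def, hW_def]
  have hintS : ∫ x in S, g x = n * W - a * W := by
    rw [hg_def]
    rw [integral_sub hiS (integrableOn_const (C := a) hScomp.measure_lt_top.ne)]
    rw [hmomS, setIntegral_const]
    simp [smul_eq_mul, mul_comm, Measure.real, hV_def, hW_def]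
  rw [hintP, hintS] at hkey
  have hVW : V ≤ W := by
    have : a = (n : ℝ) + 1 := ha_def
    nlinarith [hkey]
  calc V ≤ W := hVW
    _ = ((n : ℝ) + 1) ^ n / (n.factorial : ℝ) := by rw [hvolS, ha_def]
end

section
/- Let n ≥ 1 and let P ⊆ ℝⁿ be a compact set with nonempty interior of the form P = {x ∈ ℝⁿ : ⟨l_F, x⟩ ≥ −a_F for all F in a finite index set}, where each l_F ∈ ℤⁿ is a primitive lattice vector and each a_F is a rational number with 0 < a_F ≤ 1, and suppose the barycenter of P is the origin. Then there exists an invertible affine map T : ℝⁿ → ℝⁿ such that T(P) is contained in the positive octant [0,∞)ⁿ, the barycenter of T(P) is (1,1,...,1), and Vol(T(P)) ≥ Vol(P). -/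
open MeasureTheory Matrix Pointwise

private lemma aux_rows (n : ℕ) (ι : Type) (s : Finset ι) (l : ι → Fin n → ℤ)
    (M : Matrix ↥s (Fin n) ℝ) (hM : M = Matrix.of fun (F : ↥s) j => (l F.1 j : ℝ))
    (hinj : Function.Injective M.mulVecLin) :
    ∃ Fsel : Fin n → ↥s, ∃ d : ℤ, d ≠ 0 ∧
      (Matrix.of (fun i j => ((l (Fsel i).1 j : ℝ)))).det = (d : ℝ) := by
  have hrank : M.rank = n := by
    rw [Matrix.rank, LinearMap.finrank_range_of_inj hinj]
    simp
  have hrankT : Mᵀ.rank = n := by rw [Matrix.rank_transpose]; exact hrank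
  have hspan : Submodule.span ℝ (Set.range (fun F : ↥s => (M F))) = ⊤ := by
    have := Matrix.range_mulVecLin Mᵀ
    rw [show Set.range Mᵀ.col = Set.range (fun F : ↥s => M F) from rfl] at this
    have htop : LinearMap.range Mᵀ.mulVecLin = ⊤ := by
      apply Submodule.eq_top_of_finrank_eq
      rw [← Matrix.rank, hrankT]
      simp
    rw [this] at htop
    exact htop
  obtain ⟨b, hbsub, hbspan, hbli⟩ := exists_linearIndependent ℝ
    (Set.range (fun F : ↥s => (M F)))
  rw [hspan] at hbspan
  have hbfin : b.Finite := hbli.setFinite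
  have : Fintype b := hbfin.fintype
  have hcard : Fintype.card b = n := by
    let B : Module.Basis b ℝ (Fin n → ℝ) := Module.Basis.mk hbli (by rw [Subtype.range_val, hbspan])
    have := Module.finrank_eq_card_basis B
    simp at this; rw [Set.ncard_eq_toFinset_card', Set.toFinset_card] at this; omega
  let e : Fin n ≃ b := (Fintype.equivFinOfCardEq hcard).symm
  have hv : ∀ i : Fin n, ∃ F : ↥s, M F = (e i : Fin n → ℝ) := by
    intro i
    obtain ⟨F, hF⟩ := hbsub (e i).2
    exact ⟨F, hF⟩
  choose Fsel hFsel using hv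
  have hli : LinearIndependent ℝ (fun i : Fin n => M (Fsel i)) := by
    have : (fun i : Fin n => M (Fsel i)) = (fun x : b => (x : Fin n → ℝ)) ∘ e := by
      funext i; simp [hFsel]
    rw [this]
    exact hbli.comp e e.injective
  refine ⟨Fsel, (Matrix.of fun i j => l (Fsel i).1 j).det, ?_, ?_⟩
  · intro h0
    have hdet0 : (Matrix.of (fun i j => ((l (Fsel i).1 j : ℝ)))).det = 0 := by
      have key : (Matrix.of (fun i j => ((l (Fsel i).1 j : ℝ)))) =
        (Matrix.of fun i j => l (Fsel i).1 j).map (Int.castRingHom ℝ) := rfl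
      rw [key, ← RingHom.mapMatrix_apply, ← RingHom.map_det,
        show ((Matrix.of fun i j => l (Fsel i).1 j).det) = (0:ℤ) from h0]
      simp
    obtain ⟨v, hv0, hvm⟩ := (Matrix.exists_vecMul_eq_zero_iff).2 hdet0
    have := Fintype.linearIndependent_iff.1 hli v ?_
    · exact hv0 (funext this)
    · funext j
      have h2 := congrFun hvm j
      simp only [Matrix.vecMul, dotProduct, Matrix.of_apply, Pi.zero_apply] at h2
      simp only [Finset.sum_apply, Pi.smul_apply, smul_eq_mul, hM, Matrix.of_apply, Pi.zero_apply]
      exact h2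
  · have key : (Matrix.of (fun i j => ((l (Fsel i).1 j : ℝ)))) =
        (Matrix.of fun i j => l (Fsel i).1 j).map (Int.castRingHom ℝ) := rfl
    rw [key, ← RingHom.mapMatrix_apply, ← RingHom.map_det]; rfl

/-- If `P ⊆ ℝⁿ` (`n ≥ 1`) is a compact set with nonempty interior cut out
by inequalities `⟨l_F, x⟩ ≥ -a_F` with primitive integer normals `l_F` and rational
`0 < a_F ≤ 1`, and the barycenter of `P` is the origin, then there is an invertible
affine map `T` of `ℝⁿ` such that `T(P)` lies in the positive octant, has barycenter
`(1,…,1)`, and `Vol(T(P)) ≥ Vol(P)`. -/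
theorem exists_affine_normalization (n : ℕ) (hn : 1 ≤ n)
    (ι : Type) (s : Finset ι) (l : ι → Fin n → ℤ) (a : ι → ℚ)
    (hprim : ∀ F ∈ s, Finset.univ.gcd (fun i => (l F i).natAbs) = 1)
    (ha : ∀ F ∈ s, 0 < a F ∧ a F ≤ 1)
    (P : Set (Fin n → ℝ))
    (hP : P = {x : Fin n → ℝ | ∀ F ∈ s, -(a F : ℝ) ≤ ∑ i, (l F i : ℝ) * x i})
    (hcomp : IsCompact P) (hint : (interior P).Nonempty)
    (hbar : ∫ x in P, x = 0) :
    ∃ T : (Fin n → ℝ) ≃ᵃ[ℝ] (Fin n → ℝ),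
      (∀ y ∈ ⇑T '' P, ∀ i, 0 ≤ y i) ∧
      (∫ y in ⇑T '' P, y = (volume (⇑T '' P)).toReal • (fun _ => (1 : ℝ))) ∧
      volume P ≤ volume (⇑T '' P) := by
  classical
  obtain ⟨x0, hx0i⟩ := hint
  have hx0 : x0 ∈ P := interior_subset hx0i
  set M : Matrix ↥s (Fin n) ℝ := Matrix.of (fun (F : ↥s) j => (l F.1 j : ℝ)) with hM
  -- injectivity of mulVecLin from compactness
  have hinj : Function.Injective M.mulVecLin := by
    rw [← LinearMap.ker_eq_bot, Submodule.eq_bot_iff]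
    intro v hv
    by_contra hv0
    obtain ⟨C, hC⟩ := isBounded_iff_forall_norm_le.1 hcomp.isBounded
    have hvnorm : 0 < ‖v‖ := norm_pos_iff.2 hv0
    have hmem : ∀ t : ℝ, x0 + t • v ∈ P := by
      intro t
      rw [hP]
      intro F hF
      have hzero : ∑ i, (l F i : ℝ) * v i = 0 := by
        have h3 : M.mulVecLin v = 0 := hv
        have := congrFun h3 ⟨F, hF⟩
        simpa [hM, Matrix.mulVecLin, Matrix.mulVec, dotProduct] using this
      have hline : ∑ i, (l F i : ℝ) * (x0 + t • v) i
          = ∑ i, (l F i : ℝ) * x0 i + t * ∑ i, (l F i : ℝ) * v i := by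
        rw [Finset.mul_sum]
        rw [← Finset.sum_add_distrib]
        apply Finset.sum_congr rfl
        intro i _
        simp [Pi.add_apply, Pi.smul_apply]
        ring
      rw [hline, hzero, mul_zero, add_zero]
      have := hP ▸ hx0
      exact this F hF
    set t : ℝ := (C + ‖x0‖ + 1) / ‖v‖ with ht
    have hCt := hC _ (hmem t)
    have h4 : ‖t • v‖ ≤ ‖x0 + t • v‖ + ‖x0‖ := by
      have h4' := norm_sub_le (x0 + t • v) x0
      rwa [add_sub_cancel_left] at h4'
    have h0C : (0:ℝ) ≤ C := le_trans (norm_nonneg x0) (hC x0 hx0)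
    have ht0 : 0 ≤ t := div_nonneg (by linarith [norm_nonneg x0]) hvnorm.le
    have h5 : ‖t • v‖ = t * ‖v‖ := by
      rw [norm_smul, Real.norm_eq_abs, abs_of_nonneg ht0]
    have h6 : t * ‖v‖ = C + ‖x0‖ + 1 := div_mul_cancel₀ _ (ne_of_gt hvnorm)
    linarith
  obtain ⟨Fsel, d, hd0, hdet⟩ := aux_rows n ι s l M hM hinj
  set Mat : Matrix (Fin n) (Fin n) ℝ := Matrix.of (fun i j => ((l (Fsel i).1 j : ℝ))) with hMat
  have hdetne : Mat.det ≠ 0 := by rw [hdet]; exact_mod_cast hd0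
  have hu : IsUnit Mat.det := isUnit_iff_ne_zero.2 hdetne
  set A : (Fin n → ℝ) ≃ₗ[ℝ] (Fin n → ℝ) := Mat.toLinearEquiv' (Mat.invertibleOfIsUnitDet hu)
    with hA
  have hAcoe : (A : (Fin n → ℝ) →ₗ[ℝ] (Fin n → ℝ)) = Matrix.toLin' Mat :=
    Matrix.toLinearEquiv'_apply Mat _
  have hAapp : ∀ x, A x = Mat.mulVec x := by
    intro x
    have : A x = (A : (Fin n → ℝ) →ₗ[ℝ] (Fin n → ℝ)) x := rfl
    rw [this, hAcoe, Matrix.toLin'_apply]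
  have hdetA : LinearMap.det (A : (Fin n → ℝ) →ₗ[ℝ] (Fin n → ℝ)) = Mat.det := by
    rw [hAcoe, LinearMap.det_toLin']
  set c : Fin n → ℝ := fun _ => (1:ℝ) with hc
  set T : (Fin n → ℝ) ≃ᵃ[ℝ] (Fin n → ℝ) :=
    (A.toAffineEquiv).trans (AffineEquiv.constVAdd ℝ (Fin n → ℝ) c) with hTdef
  have hT : ∀ x, T x = c + A x := fun x => rfl
  have hPmeas : MeasurableSet P := hcomp.isClosed.measurableSet
  have habs : (1:ℝ) ≤ |Mat.det| := by
    rw [hdet, ← Int.cast_abs]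
    exact_mod_cast Int.one_le_abs hd0
  have hvol : volume (⇑T '' P) = ENNReal.ofReal |Mat.det| * volume P := by
    have himg : ⇑T '' P = c +ᵥ ((A : (Fin n → ℝ) →ₗ[ℝ] (Fin n → ℝ)) '' P) := by
      rw [← Set.image_vadd, ← Set.image_comp]
      rfl
    rw [himg, measure_vadd, Measure.addHaar_image_linearMap, hdetA]
  set A' : (Fin n → ℝ) →L[ℝ] (Fin n → ℝ) :=
    LinearMap.toContinuousLinearMap (A : (Fin n → ℝ) →ₗ[ℝ] (Fin n → ℝ)) with hA'
  have hA'app : ∀ x, A' x = A x := fun x => rfl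
  have hA'det : A'.det = Mat.det := by
    rw [ContinuousLinearMap.det, ← hdetA]
    congr 1
  refine ⟨T, ?_, ?_, ?_⟩
  · rintro y ⟨x, hxP, rfl⟩ i
    have hxP' := hP ▸ hxP
    have h1 : -((a (Fsel i).1 : ℝ)) ≤ ∑ j, (l (Fsel i).1 j : ℝ) * x j := hxP' _ (Fsel i).2
    have h2 : ((a (Fsel i).1 : ℝ)) ≤ 1 := by exact_mod_cast (ha _ (Fsel i).2).2
    have h3 : A x i = ∑ j, (l (Fsel i).1 j : ℝ) * x j := by
      rw [hAapp]
      simp [Matrix.mulVec, dotProduct, hMat]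
    rw [hT]
    simp only [Pi.add_apply]
    rw [h3]
    have hci : c i = 1 := rfl
    rw [hci]
    linarith
  · have hderiv : ∀ x ∈ P, HasFDerivWithinAt (⇑T) A' P x := by
      intro x hx
      have h1 : HasFDerivAt (⇑T) A' x := by
        have h2 : HasFDerivAt (fun y => c + A' y) A' x := (A'.hasFDerivAt).const_add c
        have h3 : (⇑T) = fun y => c + A' y := funext (fun y => hT y)
        rw [h3]
        exact h2
      exact h1.hasFDerivWithinAt
    have hIeq := integral_image_eq_integral_abs_det_fderiv_smul volume hPmeas
      (fun x hx => hderiv x hx) (T.injective.injOn) (fun y => y)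
    rw [hIeq]
    have hIntid : IntegrableOn (fun x : Fin n → ℝ => x) P volume :=
      ContinuousOn.integrableOn_compact hcomp continuousOn_id
    have hIntA : IntegrableOn (fun x => A x) P volume := by
      have := A'.integrable_comp hIntid
      simpa [hA'app, IntegrableOn] using this
    have hconst : IntegrableOn (fun _ : Fin n → ℝ => c) P volume :=
      integrableOn_const hcomp.measure_lt_top.ne
    have hsplit : ∫ x in P, (c + A x) = (volume P).toReal • c := by
      rw [integral_add hconst hIntA]
      have hAc : ∫ x in P, A x = 0 := by
        have h5 : ∫ x in P, A' x = A' (∫ x in P, x) :=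
          A'.integral_comp_comm hIntid
        rw [hbar] at h5
        simpa [hA'app] using h5
      rw [hAc, add_zero, setIntegral_const, Measure.real]
    have hconstdet : ∀ x : Fin n → ℝ, |A'.det| • (T x) = |Mat.det| • (c + A x) := by
      intro x
      rw [hA'det, hT]
    calc ∫ x in P, |A'.det| • (T x)
        = ∫ x in P, |Mat.det| • (c + A x) := by simp_rw [hconstdet]
      _ = |Mat.det| • ∫ x in P, (c + A x) := integral_smul _ _
      _ = |Mat.det| • ((volume P).toReal • c) := by rw [hsplit]
      _ = (volume (⇑T '' P)).toReal • c := by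
          rw [hvol, ENNReal.toReal_mul, ENNReal.toReal_ofReal (abs_nonneg _), smul_smul]
  · rw [hvol]
    refine le_mul_of_one_le_left (zero_le) ?_
    rw [ENNReal.one_le_ofReal]
    linarith
end

section
/- Let n ≥ 1 and let P ⊆ ℝⁿ be a compact set of the form P = {x ∈ ℝⁿ : ⟨l_F, x⟩ ≥ −a_F for all F in a finite index set}, where each l_F is a nonzero vector in ℤⁿ and each a_F is a real number with 0 < a_F ≤ 1. Then the only point of ℤⁿ lying in the interior of P is the origin; in particular 0 is the unique interior lattice point of P. -/
/-- If `P ⊆ ℝⁿ` (`n ≥ 1`) is a compact set of the form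
`P = {x : ⟨l_F, x⟩ ≥ -a_F, F ∈ s}` with nonzero integer vectors `l_F` and real
constants `0 < a_F ≤ 1`, then the origin is the unique lattice point in the
interior of `P`. -/
theorem unique_interior_lattice_point (n : ℕ) (hn : 1 ≤ n)
    (ι : Type) (s : Finset ι) (l : ι → Fin n → ℤ) (a : ι → ℝ)
    (hl : ∀ F ∈ s, l F ≠ 0)
    (ha : ∀ F ∈ s, 0 < a F ∧ a F ≤ 1)
    (P : Set (Fin n → ℝ))
    (hP : P = {x : Fin n → ℝ | ∀ F ∈ s, -(a F) ≤ ∑ i, (l F i : ℝ) * x i})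
    (hcomp : IsCompact P) :
    (0 : Fin n → ℝ) ∈ interior P ∧
      ∀ z : Fin n → ℤ, (fun i => (z i : ℝ)) ∈ interior P → z = 0 := by
  -- openness of the strict set
  have hcont : ∀ F : ι, Continuous fun x : Fin n → ℝ => ∑ i, (l F i : ℝ) * x i :=
    fun F => continuous_finset_sum _ fun i _ => continuous_const.mul (continuous_apply i)
  constructor
  · -- 0 is in the interior
    set U : Set (Fin n → ℝ) := {x | ∀ F ∈ s, -(a F) < ∑ i, (l F i : ℝ) * x i} with hU
    have hUopen : IsOpen U := by
      have : U = ⋂ F ∈ s, {x : Fin n → ℝ | -(a F) < ∑ i, (l F i : ℝ) * x i} := by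
        ext x; simp [hU]
      rw [this]
      exact isOpen_biInter_finset fun F _ => isOpen_lt continuous_const (hcont F)
    have hUP : U ⊆ P := by
      intro x hx
      rw [hP]
      exact fun F hF => (hx F hF).le
    have h0U : (0 : Fin n → ℝ) ∈ U := by
      intro F hF
      simp [neg_lt_zero.2 (ha F hF).1]
    exact interior_maximal hUP hUopen h0U
  · intro z hz
    set zR : Fin n → ℝ := fun i => (z i : ℝ) with hzR
    have hzP : zR ∈ P := interior_subset hz
    -- get a ball around zR inside P
    obtain ⟨ε, hε, hball⟩ := Metric.isOpen_iff.1 isOpen_interior _ hz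
    have hballP : Metric.ball zR ε ⊆ P := hball.trans interior_subset
    -- each inner product with z is nonnegative
    have hS : ∀ F ∈ s, (0:ℝ) ≤ ∑ i, (l F i : ℝ) * zR i := by
      intro F hF
      by_contra hneg
      push_neg at hneg
      set S : ℝ := ∑ i, (l F i : ℝ) * zR i with hSdef
      have hSint : S = ((∑ i, l F i * z i : ℤ) : ℝ) := by push_cast [hSdef, hzR]; ring_nf
      have hSle : S ≤ -1 := by
        rw [hSint]
        have h0 : (∑ i, l F i * z i : ℤ) < 0 := by
          have := hneg; rw [hSint] at this; exact_mod_cast this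
        have h1 : (∑ i, l F i * z i : ℤ) ≤ -1 := by omega
        exact_mod_cast h1
      -- sum of squares ≥ 1
      have hQ : (1:ℝ) ≤ ∑ i, ((l F i : ℝ))^2 := by
        obtain ⟨i, hi⟩ := Function.ne_iff.1 (hl F hF)
        have hi' : l F i ≠ 0 := by simpa using hi
        have h1 : (1:ℝ) ≤ ((l F i : ℝ))^2 := by
          have : (1:ℤ) ≤ (l F i)^2 := by
            rcases lt_or_gt_of_ne hi' with h | h <;> nlinarith
          exact_mod_cast this
        calc (1:ℝ) ≤ ((l F i : ℝ))^2 := h1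
          _ ≤ ∑ j, ((l F j : ℝ))^2 :=
            Finset.single_le_sum (f := fun j => ((l F j : ℝ))^2)
              (fun j _ => sq_nonneg _) (Finset.mem_univ i)
      set B : ℝ := 1 + ∑ i, |(l F i : ℝ)| with hB
      have hBpos : 0 < B := by
        have : (0:ℝ) ≤ ∑ i, |(l F i : ℝ)| :=
          Finset.sum_nonneg fun i _ => abs_nonneg _
        linarith
      set δ : ℝ := ε / (2 * B) with hδ
      have hδpos : 0 < δ := div_pos hε (by linarith)
      set w : Fin n → ℝ := fun i => zR i - δ * (l F i : ℝ) with hw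
      have hwball : w ∈ Metric.ball zR ε := by
        rw [Metric.mem_ball]
        rw [dist_pi_lt_iff hε]
        intro i
        have h1 : |(l F i : ℝ)| ≤ B - 1 := by
          rw [hB]
          have := Finset.single_le_sum (f := fun j => |(l F j : ℝ)|)
            (fun j _ => abs_nonneg _) (Finset.mem_univ i)
          linarith
        have : dist (w i) (zR i) = δ * |(l F i : ℝ)| := by
          simp [hw, Real.dist_eq, abs_mul, abs_of_pos hδpos]
        rw [this]
        have h2 : δ * |(l F i : ℝ)| ≤ δ * (B - 1) :=
          mul_le_mul_of_nonneg_left h1 hδpos.le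
        have h3 : δ * B = ε / 2 := by
          rw [hδ]; field_simp
        nlinarith
      have hwP : w ∈ P := hballP hwball
      rw [hP] at hwP hzP
      have hzF : -(a F) ≤ S := hzP F hF
      have hwF : -(a F) ≤ ∑ i, (l F i : ℝ) * w i := hwP F hF
      have hsum : ∑ i, (l F i : ℝ) * w i = S - δ * ∑ i, ((l F i : ℝ))^2 := by
        rw [hSdef, Finset.mul_sum, ← Finset.sum_sub_distrib]
        congr 1; funext i; rw [hw]; ring
      rw [hsum] at hwF
      have haF := ha F hF
      -- S ≤ -1 ≤ -(a F) ≤ S  forces S = -(a F); then contradiction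
      nlinarith
    -- the whole ray lies in P
    have hray : ∀ t : ℝ, 0 ≤ t → (fun i => t * zR i) ∈ P := by
      intro t ht
      rw [hP]
      intro F hF
      have : ∑ i, (l F i : ℝ) * (t * zR i) = t * ∑ i, (l F i : ℝ) * zR i := by
        rw [Finset.mul_sum]; congr 1; funext i; ring
      rw [this]
      have := mul_nonneg ht (hS F hF)
      have haF := (ha F hF).1
      linarith
    -- boundedness forces z = 0
    obtain ⟨R, hR⟩ := isBounded_iff_forall_norm_le.1 hcomp.isBounded
    by_contra hz0
    obtain ⟨i, hi⟩ := Function.ne_iff.1 hz0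
    have hzi : (1:ℝ) ≤ |(z i : ℝ)| := by
      have : (1:ℤ) ≤ |z i| := Int.one_le_abs (by simpa using hi)
      exact_mod_cast this
    set t : ℝ := |R| + 1 with ht
    have htnn : 0 ≤ t := by positivity
    have hmem := hray t htnn
    have h1 : ‖(fun j => t * zR j : Fin n → ℝ)‖ ≤ R := hR _ hmem
    have h2 : |t| * |zR i| ≤ ‖(fun j => t * zR j : Fin n → ℝ)‖ := by
      have := norm_le_pi_norm (fun j => t * zR j) i
      simpa [Real.norm_eq_abs, abs_mul] using this
    have h3 : t ≤ |t| * |zR i| := by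
      rw [abs_of_nonneg htnn]
      nlinarith
    have : R < t := by
      have := abs_nonneg R
      rw [ht]
      have : R ≤ |R| := le_abs_self R
      linarith
    linarith
end

section
/- (Prekopa's theorem.) Let I ⊆ ℝ be an open interval and let φ : I × ℝⁿ → ℝ be a convex function such that for every t ∈ I the integral ∫_{ℝⁿ} e^{−φ(t,x)} dx is finite and positive. Then the function t ↦ −log ∫_{ℝⁿ} e^{−φ(t,x)} dx is convex on I. -/
open MeasureTheory
open Set Pointwise ENNReal NNReal

lemma aux_geom_arith {l : ℝ} (h0 : 0 < l) (h1 : l < 1) (a b : ℝ≥0∞) :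
    a ^ (1 - l) * b ^ l ≤ ENNReal.ofReal (1 - l) * a + ENNReal.ofReal l * b := by
  rcases eq_or_ne a ∞ with rfl | ha
  · have : ENNReal.ofReal (1 - l) * ∞ = ∞ := by
      rw [ENNReal.mul_top]
      simp [ENNReal.ofReal_eq_zero, not_le, sub_pos, h1]
    simp [this]
  rcases eq_or_ne b ∞ with rfl | hb
  · have : ENNReal.ofReal l * ∞ = ∞ := by
      rw [ENNReal.mul_top]
      simp [ENNReal.ofReal_eq_zero, not_le, h0]
    simp [this]
  lift a to ℝ≥0 using ha
  lift b to ℝ≥0 using hb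
  have key := NNReal.geom_mean_le_arith_mean2_weighted (w₁ := Real.toNNReal (1 - l))
    (w₂ := Real.toNNReal l) (p₁ := a) (p₂ := b) ?hw
  · have e1 : ((Real.toNNReal (1 - l) : ℝ) : ℝ) = 1 - l := Real.coe_toNNReal _ (by linarith)
    have e2 : ((Real.toNNReal l : ℝ) : ℝ) = l := Real.coe_toNNReal _ h0.le
    calc (a : ℝ≥0∞) ^ (1 - l) * (b : ℝ≥0∞) ^ l
        = ((a ^ (1 - l) * b ^ l : ℝ≥0) : ℝ≥0∞) := by
          rw [ENNReal.coe_mul, ENNReal.coe_rpow_of_nonneg _ (by linarith),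
            ENNReal.coe_rpow_of_nonneg _ h0.le]
      _ ≤ ((Real.toNNReal (1 - l) * a + Real.toNNReal l * b : ℝ≥0) : ℝ≥0∞) := by
          rw [ENNReal.coe_le_coe]
          calc a ^ (1 - l) * b ^ l = a ^ ((Real.toNNReal (1-l) : ℝ)) * b ^ ((Real.toNNReal l : ℝ)) := by
                rw [e1, e2]
            _ ≤ _ := key
      _ = ENNReal.ofReal (1 - l) * a + ENNReal.ofReal l * b := by
          simp [ENNReal.coe_add, ENNReal.coe_mul, ENNReal.ofReal]
  case hw =>
    rw [← Real.toNNReal_add (by linarith) h0.le]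
    norm_num


lemma compact_sumset {K L : Set ℝ} (hK : IsCompact K) (hL : IsCompact L)
    (hKne : K.Nonempty) (hLne : L.Nonempty) :
    volume K + volume L ≤ volume (K + L) := by
  obtain ⟨a, haK, ha⟩ := hK.exists_isGreatest hKne
  obtain ⟨b, hbL, hb⟩ := hL.exists_isLeast hLne
  set S : Set ℝ := a +ᵥ L with hSdef
  set T : Set ℝ := b +ᵥ K with hTdef
  have hSsub : S ⊆ K + L := by
    rintro _ ⟨l, hl, rfl⟩
    exact ⟨a, haK, l, hl, rfl⟩
  have hTsub : T ⊆ K + L := by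
    rintro _ ⟨k, hk, rfl⟩
    exact ⟨k, hk, b, hbL, add_comm k b⟩
  have hST : S ∩ T ⊆ {a + b} := by
    rintro x ⟨⟨l, hl, rfl⟩, ⟨k, hk, hx⟩⟩
    have h1 : b ≤ l := hb hl
    have h2 : k ≤ a := ha hk
    have hx' : b + k = a + l := hx
    simp only [mem_singleton_iff, vadd_eq_add]
    linarith
  have hSm : MeasurableSet S := (hL.vadd a).measurableSet
  have hTm : MeasurableSet T := (hK.vadd b).measurableSet
  have hint : volume (S ∩ T) = 0 :=
    le_antisymm (le_trans (measure_mono hST) (by simp)) bot_le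
  calc volume K + volume L = volume S + volume T := by
        rw [measure_vadd volume a L, measure_vadd volume b K, add_comm]
    _ = volume (S ∪ T) + volume (S ∩ T) := (measure_union_add_inter' hSm T).symm
    _ = volume (S ∪ T) := by rw [hint, add_zero]
    _ ≤ volume (K + L) := measure_mono (union_subset hSsub hTsub)

lemma sumset_meas {A B : Set ℝ} (hAne : A.Nonempty) (hBne : B.Nonempty)
    (hAm : MeasurableSet A) (hBm : MeasurableSet B) :
    volume A + volume B ≤ volume (A + B) := by
  rw [hAm.measure_eq_iSup_isCompact, hBm.measure_eq_iSup_isCompact]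
  simp_rw [iSup_and']
  refine ENNReal.biSup_add_biSup_le' (p := fun K => K ⊆ A ∧ IsCompact K)
    (q := fun L => L ⊆ B ∧ IsCompact L)
    ⟨∅, empty_subset _, isCompact_empty⟩ ⟨∅, empty_subset _, isCompact_empty⟩ ?_
  rintro K ⟨hKA, hK⟩ L ⟨hLB, hL⟩
  rcases K.eq_empty_or_nonempty with rfl | hKne
  · rcases L.eq_empty_or_nonempty with rfl | hLne
    · simp
    · obtain ⟨a₀, ha₀⟩ := hAne
      have : a₀ +ᵥ L ⊆ A + B := by
        rintro _ ⟨l, hl, rfl⟩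
        exact ⟨a₀, ha₀, l, hLB hl, rfl⟩
      simpa [measure_vadd] using (measure_mono this).trans_eq' (measure_vadd volume a₀ L)
  rcases L.eq_empty_or_nonempty with rfl | hLne
  · obtain ⟨b₀, hb₀⟩ := hBne
    have : b₀ +ᵥ K ⊆ A + B := by
      rintro _ ⟨k, hk, rfl⟩
      exact ⟨k, hKA hk, b₀, hb₀, add_comm k b₀⟩
    simpa [measure_vadd] using (measure_mono this).trans_eq' (measure_vadd volume b₀ K)
  · exact (compact_sumset hK hL hKne hLne).trans
      (measure_mono (add_subset_add hKA hLB))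


lemma layer_aux {u : ℝ → ℝ≥0∞} (hu : Measurable u) (hu1 : ∀ x, u x ≤ 1) :
    ∫⁻ x, u x = ∫⁻ t in Ioo (0:ℝ) 1, volume {x | ENNReal.ofReal t < u x} := by
  have hne : ∀ x, u x ≠ ∞ := fun x => ((hu1 x).trans_lt ENNReal.one_lt_top).ne
  have h1 : ∀ x, ENNReal.ofReal ((u x).toReal) = u x := fun x => ENNReal.ofReal_toReal (hne x)
  have hmeas : Measurable fun x => (u x).toReal := hu.ennreal_toReal
  have hr1 : ∀ x, (u x).toReal ≤ 1 := by
    intro x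
    have := ENNReal.toReal_mono ENNReal.one_ne_top (hu1 x)
    simpa using this
  calc ∫⁻ x, u x = ∫⁻ x, ENNReal.ofReal ((u x).toReal) := by simp only [h1]
    _ = ∫⁻ t in Ioi (0:ℝ), volume {x | t < (u x).toReal} :=
        lintegral_eq_lintegral_meas_lt volume
          (Filter.Eventually.of_forall fun x => ENNReal.toReal_nonneg) hmeas.aemeasurable
    _ = ∫⁻ t in Ioo (0:ℝ) 1, volume {x | t < (u x).toReal} := by
        rw [← Ioo_union_Ici_eq_Ioi zero_lt_one,
          lintegral_union measurableSet_Ici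
            (disjoint_left.mpr fun t ht ht' => (not_le.mpr ht.2) ht')]
        have : ∫⁻ t in Ici (1:ℝ), volume {x | t < (u x).toReal} = 0 := by
          rw [setLIntegral_congr_fun measurableSet_Ici
            (fun t (ht : 1 ≤ t) => ?_), lintegral_zero]
          have : {x | t < (u x).toReal} = ∅ := by
            ext x
            simp only [mem_setOf_eq, mem_empty_iff_false, iff_false, not_lt]
            exact (hr1 x).trans ht
          rw [this]
          simp
        rw [this, add_zero]
    _ = ∫⁻ t in Ioo (0:ℝ) 1, volume {x | ENNReal.ofReal t < u x} := by
        refine setLIntegral_congr_fun measurableSet_Ioo fun t ht => ?_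
        congr 1
        ext x
        exact (ENNReal.ofReal_lt_iff_lt_toReal ht.1.le (hne x)).symm

lemma dim1_norm {l : ℝ} (hl0 : 0 < l) (hl1 : l < 1)
    {f g h : ℝ → ℝ≥0∞} (hf : Measurable f) (hg : Measurable g) (hh : Measurable h)
    (hf1 : ∀ x, f x ≤ 1) (hg1 : ∀ x, g x ≤ 1)
    (hfs : ∀ t : ℝ, 0 ≤ t → t < 1 → ∃ x, ENNReal.ofReal t < f x)
    (hgs : ∀ t : ℝ, 0 ≤ t → t < 1 → ∃ y, ENNReal.ofReal t < g y)
    (hyp : ∀ x y, f x ^ (1 - l) * g y ^ l ≤ h ((1 - l) * x + l * y)) :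
    ENNReal.ofReal (1 - l) * (∫⁻ x, f x) + ENNReal.ofReal l * (∫⁻ y, g y) ≤ ∫⁻ z, h z := by
  have ha0 : (0:ℝ) < 1 - l := by linarith
  set h' : ℝ → ℝ≥0∞ := fun x => min (h x) 1 with hh'def
  have hh' : Measurable h' := hh.min measurable_const
  have hh'1 : ∀ x, h' x ≤ 1 := fun x => min_le_right _ _
  set A : ℝ → Set ℝ := fun t => {x | ENNReal.ofReal t < f x} with hAdef
  set B : ℝ → Set ℝ := fun t => {x | ENNReal.ofReal t < g x} with hBdef
  set C : ℝ → Set ℝ := fun t => {x | ENNReal.ofReal t < h' x} with hCdef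
  have hAm : ∀ t, MeasurableSet (A t) := fun t => hf measurableSet_Ioi
  have hBm : ∀ t, MeasurableSet (B t) := fun t => hg measurableSet_Ioi
  -- antitone measurability
  have hAmono : Antitone fun t => volume (A t) := fun s t hst =>
    measure_mono fun x hx => lt_of_le_of_lt (ENNReal.ofReal_le_ofReal hst) hx
  have hBmono : Antitone fun t => volume (B t) := fun s t hst =>
    measure_mono fun x hx => lt_of_le_of_lt (ENNReal.ofReal_le_ofReal hst) hx
  have key : ∀ t ∈ Ioo (0:ℝ) 1,
      ENNReal.ofReal (1 - l) * volume (A t) + ENNReal.ofReal l * volume (B t)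
        ≤ volume (C t) := by
    rintro t ⟨ht0, ht1⟩
    have ht' : (0:ℝ≥0∞) < ENNReal.ofReal t := ENNReal.ofReal_pos.mpr ht0
    have hsub : ((1 - l) • A t) + (l • B t) ⊆ C t := by
      rintro _ ⟨_, ⟨x, hx, rfl⟩, _, ⟨y, hy, rfl⟩, rfl⟩
      have hx' : ENNReal.ofReal t < f x := hx
      have hy' : ENNReal.ofReal t < g y := hy
      show ENNReal.ofReal t < h' ((1 - l) • x + l • y)
      have step : ENNReal.ofReal t < f x ^ (1 - l) * g y ^ l := by
        have e1 : ENNReal.ofReal t = ENNReal.ofReal t ^ (1 - l) * ENNReal.ofReal t ^ l := by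
          rw [← ENNReal.rpow_add _ _ ht'.ne' ENNReal.ofReal_ne_top]
          norm_num
        rw [e1]
        have s1 : ENNReal.ofReal t ^ (1 - l) * ENNReal.ofReal t ^ l
            < f x ^ (1 - l) * ENNReal.ofReal t ^ l := by
          rw [ENNReal.mul_lt_mul_iff_left
            (ENNReal.rpow_pos_of_nonneg ht' hl0.le).ne' (ENNReal.rpow_ne_top_of_nonneg hl0.le ENNReal.ofReal_ne_top)]
          exact ENNReal.rpow_lt_rpow hx' ha0
        have s2 : f x ^ (1 - l) * ENNReal.ofReal t ^ l < f x ^ (1 - l) * g y ^ l := by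
          rw [ENNReal.mul_lt_mul_iff_right
            (ENNReal.rpow_pos_of_nonneg (ht'.trans hx') ha0.le).ne'
            (ENNReal.rpow_ne_top_of_nonneg ha0.le ((hf1 x).trans_lt ENNReal.one_lt_top).ne)]
          exact ENNReal.rpow_lt_rpow hy' hl0
        exact s1.trans s2
      have hle := hyp x y
      refine lt_min (step.trans_le (by simpa [smul_eq_mul] using hle)) ?_
      exact ENNReal.ofReal_lt_one.mpr ht1
    have hAne : (A t).Nonempty := hfs t ht0.le ht1
    have hBne : (B t).Nonempty := hgs t ht0.le ht1
    calc ENNReal.ofReal (1 - l) * volume (A t) + ENNReal.ofReal l * volume (B t)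
        = volume ((1 - l) • A t) + volume (l • B t) := by
          rw [Measure.addHaar_smul, Measure.addHaar_smul]
          simp [abs_of_pos ha0, abs_of_pos hl0]
      _ ≤ volume (((1 - l) • A t) + (l • B t)) :=
          sumset_meas (hAne.smul_set) (hBne.smul_set)
            ((hAm t).const_smul₀ _) ((hBm t).const_smul₀ _)
      _ ≤ volume (C t) := measure_mono hsub
  calc ENNReal.ofReal (1 - l) * (∫⁻ x, f x) + ENNReal.ofReal l * (∫⁻ y, g y)
      = ∫⁻ t in Ioo (0:ℝ) 1,
          (ENNReal.ofReal (1 - l) * volume (A t) + ENNReal.ofReal l * volume (B t)) := by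
        rw [layer_aux hf hf1, layer_aux hg hg1]
        rw [lintegral_add_left (by exact (hAmono.measurable).const_mul _)]
        rw [lintegral_const_mul _ hAmono.measurable, lintegral_const_mul _ hBmono.measurable]
    _ ≤ ∫⁻ t in Ioo (0:ℝ) 1, volume (C t) := setLIntegral_mono' measurableSet_Ioo key
    _ = ∫⁻ z, h' z := (layer_aux hh' hh'1).symm
    _ ≤ ∫⁻ z, h z := lintegral_mono fun z => min_le_left _ _


lemma rpow_iSup_le {c : ℝ} (hc : 0 < c) (u : ℕ → ℝ≥0∞) :
    (⨆ M, u M) ^ c ≤ ⨆ M, u M ^ c := by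
  have h1 : ∀ M, u M ≤ (⨆ M, u M ^ c) ^ c⁻¹ := fun M => by
    have e : u M = (u M ^ c) ^ c⁻¹ := by
      rw [← ENNReal.rpow_mul, mul_inv_cancel₀ hc.ne', ENNReal.rpow_one]
    rw [e]
    exact ENNReal.rpow_le_rpow (le_iSup (fun M => u M ^ c) M) (inv_pos.mpr hc).le
  calc (⨆ M, u M) ^ c ≤ ((⨆ M, u M ^ c) ^ c⁻¹) ^ c :=
        ENNReal.rpow_le_rpow (iSup_le h1) hc.le
    _ = ⨆ M, u M ^ c := by
        rw [← ENNReal.rpow_mul, inv_mul_cancel₀ hc.ne', ENNReal.rpow_one]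

lemma dim1_bounded {l : ℝ} (hl0 : 0 < l) (hl1 : l < 1)
    {f g h : ℝ → ℝ≥0∞} (hf : Measurable f) (hg : Measurable g) (hh : Measurable h)
    (hfb : (⨆ x, f x) ≠ ∞) (hgb : (⨆ y, g y) ≠ ∞)
    (hyp : ∀ x y, f x ^ (1 - l) * g y ^ l ≤ h ((1 - l) * x + l * y)) :
    (∫⁻ x, f x) ^ (1 - l) * (∫⁻ y, g y) ^ l ≤ ∫⁻ z, h z := by
  have ha0 : (0:ℝ) < 1 - l := by linarith
  set A := ⨆ x, f x with hAdef
  set B := ⨆ y, g y with hBdef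
  rcases eq_or_ne A 0 with hA0 | hA0
  · have hf0 : ∀ x, f x = 0 := fun x => le_antisymm ((le_iSup f x).trans hA0.le) bot_le
    have : ∫⁻ x, f x = 0 := by simp [hf0]
    rw [this, ENNReal.zero_rpow_of_pos ha0, zero_mul]
    exact bot_le
  rcases eq_or_ne B 0 with hB0 | hB0
  · have hg0 : ∀ y, g y = 0 := fun y => le_antisymm ((le_iSup g y).trans hB0.le) bot_le
    have : ∫⁻ y, g y = 0 := by simp [hg0]
    rw [this, ENNReal.zero_rpow_of_pos hl0, mul_zero]
    exact bot_le
  have hAt : A ≠ ∞ := hfb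
  have hBt : B ≠ ∞ := hgb
  have hAa0 : A ^ (1 - l) ≠ 0 := by
    simp [ENNReal.rpow_eq_zero_iff, hA0, hAt, ha0, not_lt.mpr ha0.le]
  have hAat : A ^ (1 - l) ≠ ∞ := ENNReal.rpow_ne_top_of_nonneg ha0.le hAt
  have hBl0 : B ^ l ≠ 0 := by
    simp [ENNReal.rpow_eq_zero_iff, hB0, hBt, hl0, not_lt.mpr hl0.le]
  have hBlt : B ^ l ≠ ∞ := ENNReal.rpow_ne_top_of_nonneg hl0.le hBt
  set D := A ^ (1 - l) * B ^ l with hDdef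
  have hD0 : D ≠ 0 := mul_ne_zero hAa0 hBl0
  have hDt : D ≠ ∞ := ENNReal.mul_ne_top hAat hBlt
  have hDinv : D⁻¹ = (A ^ (1 - l))⁻¹ * (B ^ l)⁻¹ := ENNReal.mul_inv (Or.inl hAa0) (Or.inl hAat)
  -- key algebra
  have alg : ∀ u v : ℝ≥0∞, (u * A⁻¹) ^ (1 - l) * (v * B⁻¹) ^ l = u ^ (1 - l) * v ^ l * D⁻¹ := by
    intro u v
    rw [ENNReal.mul_rpow_of_nonneg _ _ ha0.le, ENNReal.mul_rpow_of_nonneg _ _ hl0.le,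
      ENNReal.inv_rpow, ENNReal.inv_rpow, hDinv, mul_mul_mul_comm]
  have key := dim1_norm hl0 hl1 (f := fun x => f x * A⁻¹) (g := fun y => g y * B⁻¹)
    (h := fun z => h z * D⁻¹)
    (hf.mul_const _) (hg.mul_const _) (hh.mul_const _)
    (fun x => by
      calc f x * A⁻¹ ≤ A * A⁻¹ := mul_le_mul_left (le_iSup f x) _
        _ = 1 := ENNReal.mul_inv_cancel hA0 hAt)
    (fun y => by
      calc g y * B⁻¹ ≤ B * B⁻¹ := mul_le_mul_left (le_iSup g y) _
        _ = 1 := ENNReal.mul_inv_cancel hB0 hBt)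
    (fun t ht0 ht1 => by
      have hlt : ENNReal.ofReal t * A < A := by
        conv_rhs => rw [← one_mul A]
        rw [ENNReal.mul_lt_mul_iff_left hA0 hAt]
        exact ENNReal.ofReal_lt_one.mpr ht1
      obtain ⟨x, hx⟩ := lt_iSup_iff.mp (hlt.trans_le le_rfl)
      refine ⟨x, ?_⟩
      show ENNReal.ofReal t < f x * A⁻¹
      rw [← div_eq_mul_inv]
      exact ENNReal.lt_div_iff_mul_lt (Or.inl hA0) (Or.inl hAt) |>.mpr hx)
    (fun t ht0 ht1 => by
      have hlt : ENNReal.ofReal t * B < B := by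
        conv_rhs => rw [← one_mul B]
        rw [ENNReal.mul_lt_mul_iff_left hB0 hBt]
        exact ENNReal.ofReal_lt_one.mpr ht1
      obtain ⟨y, hy⟩ := lt_iSup_iff.mp (hlt.trans_le le_rfl)
      refine ⟨y, ?_⟩
      show ENNReal.ofReal t < g y * B⁻¹
      rw [← div_eq_mul_inv]
      exact ENNReal.lt_div_iff_mul_lt (Or.inl hB0) (Or.inl hBt) |>.mpr hy)
    (fun x y => by
      rw [alg]
      exact mul_le_mul_left (hyp x y) _)
  have hintf : ∫⁻ x, f x * A⁻¹ = (∫⁻ x, f x) * A⁻¹ :=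
    lintegral_mul_const' _ _ (ENNReal.inv_ne_top.mpr hA0)
  have hintg : ∫⁻ y, g y * B⁻¹ = (∫⁻ y, g y) * B⁻¹ :=
    lintegral_mul_const' _ _ (ENNReal.inv_ne_top.mpr hB0)
  have hinth : ∫⁻ z, h z * D⁻¹ = (∫⁻ z, h z) * D⁻¹ :=
    lintegral_mul_const' _ _ (ENNReal.inv_ne_top.mpr hD0)
  have main : (∫⁻ x, f x) ^ (1 - l) * (∫⁻ y, g y) ^ l * D⁻¹ ≤ (∫⁻ z, h z) * D⁻¹ := by
    rw [← alg, ← hintf, ← hintg, ← hinth]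
    exact le_trans (aux_geom_arith hl0 hl1 _ _) key
  calc (∫⁻ x, f x) ^ (1 - l) * (∫⁻ y, g y) ^ l
      = (∫⁻ x, f x) ^ (1 - l) * (∫⁻ y, g y) ^ l * D⁻¹ * D := by
        rw [mul_assoc _ D⁻¹ D, ENNReal.inv_mul_cancel hD0 hDt, mul_one]
    _ ≤ (∫⁻ z, h z) * D⁻¹ * D := mul_le_mul_left main D
    _ = ∫⁻ z, h z := by
        rw [mul_assoc _ D⁻¹ D, ENNReal.inv_mul_cancel hD0 hDt, mul_one]

lemma dim1 {l : ℝ} (hl0 : 0 < l) (hl1 : l < 1)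
    {f g h : ℝ → ℝ≥0∞} (hf : Measurable f) (hg : Measurable g) (hh : Measurable h)
    (hyp : ∀ x y, f x ^ (1 - l) * g y ^ l ≤ h ((1 - l) * x + l * y)) :
    (∫⁻ x, f x) ^ (1 - l) * (∫⁻ y, g y) ^ l ≤ ∫⁻ z, h z := by
  have ha0 : (0:ℝ) < 1 - l := by linarith
  have trunc : ∀ (u : ℝ → ℝ≥0∞), Measurable u →
      ∫⁻ x, u x = ⨆ M : ℕ, ∫⁻ x, min (u x) M := by
    intro u hu
    rw [← lintegral_iSup (fun M => hu.min measurable_const)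
      (fun M N hMN x => min_le_min le_rfl (Nat.cast_le.mpr hMN))]
    refine lintegral_congr fun x => ?_
    rcases eq_or_ne (u x) ∞ with hx | hx
    · rw [hx]
      have e : ∀ M : ℕ, min (⊤:ℝ≥0∞) (M:ℝ≥0∞) = (M:ℝ≥0∞) := fun M => min_eq_right le_top
      simp only [e]
      exact ENNReal.iSup_natCast.symm
    · obtain ⟨M, hM⟩ := ENNReal.exists_nat_gt hx
      exact le_antisymm (le_iSup_of_le M (by rw [min_eq_left hM.le]))
        (iSup_le fun M => min_le_left _ _)
  have hM : ∀ M : ℕ, (∫⁻ x, min (f x) M) ^ (1 - l) * (∫⁻ y, min (g y) M) ^ l ≤ ∫⁻ z, h z := by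
    intro M
    refine dim1_bounded hl0 hl1 (hf.min measurable_const) (hg.min measurable_const) hh ?_ ?_ ?_
    · exact ((iSup_le fun x => min_le_right _ _).trans_lt (ENNReal.natCast_lt_top M)).ne
    · exact ((iSup_le fun y => min_le_right _ _).trans_lt (ENNReal.natCast_lt_top M)).ne
    · intro x y
      refine le_trans (mul_le_mul'
        (ENNReal.rpow_le_rpow (min_le_left _ _) ha0.le)
        (ENNReal.rpow_le_rpow (min_le_left _ _) hl0.le)) (hyp x y)
  rw [trunc f hf, trunc g hg]
  calc (⨆ M : ℕ, ∫⁻ x, min (f x) M) ^ (1 - l) * (⨆ M : ℕ, ∫⁻ y, min (g y) M) ^ l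
      ≤ (⨆ M : ℕ, (∫⁻ x, min (f x) M) ^ (1 - l)) * (⨆ M : ℕ, (∫⁻ y, min (g y) M) ^ l) :=
        mul_le_mul' (rpow_iSup_le ha0 _) (rpow_iSup_le hl0 _)
    _ ≤ ∫⁻ z, h z := by
        rw [ENNReal.iSup_mul]
        refine iSup_le fun M => ?_
        rw [ENNReal.mul_iSup]
        refine iSup_le fun N => ?_
        refine le_trans (mul_le_mul'
          (ENNReal.rpow_le_rpow
            (lintegral_mono fun x => min_le_min le_rfl (Nat.cast_le.mpr (le_max_left M N))) ha0.le)
          (ENNReal.rpow_le_rpow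
            (lintegral_mono fun y => min_le_min le_rfl (Nat.cast_le.mpr (le_max_right M N))) hl0.le))
          (hM (max M N))


lemma PL_pi (m : ℕ) {l : ℝ} (hl0 : 0 < l) (hl1 : l < 1)
    {f g h : (Fin m → ℝ) → ℝ≥0∞} (hf : Measurable f) (hg : Measurable g) (hh : Measurable h)
    (hyp : ∀ x y, f x ^ (1 - l) * g y ^ l ≤ h ((1 - l) • x + l • y)) :
    (∫⁻ x, f x) ^ (1 - l) * (∫⁻ y, g y) ^ l ≤ ∫⁻ z, h z := by
  induction m with
  | zero =>
    have huniv : volume (univ : Set (Fin 0 → ℝ)) = 1 := by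
      rw [volume_pi, Measure.pi_univ]
      simp
    have hint : ∀ u : (Fin 0 → ℝ) → ℝ≥0∞, ∫⁻ x, u x = u default := by
      intro u
      rw [lintegral_unique, huniv, mul_one]
      exact congrArg u (Subsingleton.elim _ _)
    rw [hint f, hint g, hint h]
    have key := hyp default default
    have e0 : ((1 - l) • (default : Fin 0 → ℝ) + l • default) = default :=
      Subsingleton.elim _ _
    rwa [e0] at key
  | succ m ih =>
    set e := MeasurableEquiv.piFinSuccAbove (fun _ : Fin (m + 1) => ℝ) 0 with hedef
    have mp : MeasurePreserving e volume volume :=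
      volume_preserving_piFinSuccAbove (fun _ : Fin (m + 1) => ℝ) 0
    set F : ℝ × (Fin m → ℝ) → ℝ≥0∞ := fun p => f (e.symm p) with hFdef
    set G : ℝ × (Fin m → ℝ) → ℝ≥0∞ := fun p => g (e.symm p) with hGdef
    set H : ℝ × (Fin m → ℝ) → ℝ≥0∞ := fun p => h (e.symm p) with hHdef
    have hF : Measurable F := hf.comp e.symm.measurable
    have hG : Measurable G := hg.comp e.symm.measurable
    have hH : Measurable H := hh.comp e.symm.measurable
    have lin : ∀ p q : ℝ × (Fin m → ℝ),
        e.symm ((1 - l) • p + l • q) = (1 - l) • e.symm p + l • e.symm q := by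
      rintro ⟨t, x⟩ ⟨s, y⟩
      funext i
      refine Fin.cases ?_ (fun j => ?_) i <;>
        simp [hedef, MeasurableEquiv.piFinSuccAbove, Fin.insertNth_apply_same,
          Fin.zero_succAbove, Fin.insertNth_apply_succAbove]
    have hypFGH : ∀ p q, F p ^ (1 - l) * G q ^ l ≤ H ((1 - l) • p + l • q) := by
      intro p q
      show f (e.symm p) ^ (1 - l) * g (e.symm q) ^ l ≤ h (e.symm ((1 - l) • p + l • q))
      rw [lin]
      exact hyp _ _
    have key1d : ∀ t s : ℝ,
        (∫⁻ x, F (t, x)) ^ (1 - l) * (∫⁻ y, G (s, y)) ^ l ≤ ∫⁻ z, H ((1 - l) * t + l * s, z) := by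
      intro t s
      refine ih (hF.comp (measurable_prodMk_left)) (hG.comp (measurable_prodMk_left))
        (hH.comp (measurable_prodMk_left)) ?_
      intro x y
      have := hypFGH (t, x) (s, y)
      simpa [Prod.smul_mk, Prod.mk_add_mk, smul_eq_mul] using this
    have h1d := dim1 hl0 hl1
      (f := fun t => ∫⁻ x, F (t, x)) (g := fun s => ∫⁻ y, G (s, y))
      (h := fun r => ∫⁻ z, H (r, z))
      hF.lintegral_prod_right' hG.lintegral_prod_right' hH.lintegral_prod_right' key1d
    have transfer : ∀ u : (Fin (m + 1) → ℝ) → ℝ≥0∞, Measurable u →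
        ∫⁻ x, u x = ∫⁻ t, ∫⁻ z, u (e.symm (t, z)) := by
      intro u hu
      rw [← (MeasurePreserving.symm e mp).lintegral_comp hu]
      rw [show (volume : Measure (ℝ × (Fin m → ℝ))) = (volume : Measure ℝ).prod volume from
        Measure.volume_eq_prod ..]
      exact lintegral_prod (fun p => u (e.symm p)) ((hu.comp e.symm.measurable).aemeasurable)
    rw [transfer f hf, transfer g hg, transfer h hh]
    exact h1d


/-- Prékopa's theorem: If `I ⊆ ℝ` is an open interval and
`φ : I × ℝⁿ → ℝ` is jointly convex, with `∫_{ℝⁿ} e^{-φ(t,x)} dx` finite and positive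
for each `t ∈ I`, then `t ↦ -log ∫_{ℝⁿ} e^{-φ(t,x)} dx` is convex on `I`. -/
theorem prekopa_theorem (n : ℕ) (I : Set ℝ) (hIopen : IsOpen I) (hIconv : Convex ℝ I)
    (φ : ℝ × (Fin n → ℝ) → ℝ)
    (hφ : ConvexOn ℝ (I ×ˢ (Set.univ : Set (Fin n → ℝ))) φ)
    (hInt : ∀ t ∈ I, Integrable (fun x : Fin n → ℝ => Real.exp (-φ (t, x))))
    (hpos : ∀ t ∈ I, 0 < ∫ x : Fin n → ℝ, Real.exp (-φ (t, x))) :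
    ConvexOn ℝ I (fun t => -Real.log (∫ x : Fin n → ℝ, Real.exp (-φ (t, x)))) := by
  have hcont : ContinuousOn φ (I ×ˢ (Set.univ : Set (Fin n → ℝ))) :=
    hφ.continuousOn (hIopen.prod isOpen_univ)
  have hmeas : ∀ t ∈ I, Measurable fun x : Fin n → ℝ => ENNReal.ofReal (Real.exp (-φ (t, x))) := by
    intro t ht
    have hc : Continuous fun x : Fin n → ℝ => φ (t, x) := by
      rw [← continuousOn_univ]
      exact hcont.comp ((continuous_const.prodMk continuous_id).continuousOn)
        (fun x _ => ⟨ht, mem_univ x⟩)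
    exact (Real.continuous_exp.comp hc.neg).measurable.ennreal_ofReal
  set F : ℝ → ℝ := fun t => ∫ x : Fin n → ℝ, Real.exp (-φ (t, x)) with hFdef
  have hlint : ∀ t ∈ I, ∫⁻ x : Fin n → ℝ, ENNReal.ofReal (Real.exp (-φ (t, x)))
      = ENNReal.ofReal (F t) := by
    intro t ht
    exact (ofReal_integral_eq_lintegral_ofReal (hInt t ht)
      (Filter.Eventually.of_forall fun x => (Real.exp_pos _).le)).symm
  refine ⟨hIconv, ?_⟩
  intro t₀ ht₀ t₁ ht₁ a b ha hb hab
  rcases eq_or_lt_of_le ha with rfl | ha0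
  · have hb1 : b = 1 := by linarith
    subst hb1
    simp
  rcases eq_or_lt_of_le hb with rfl | hb0
  · have ha1 : a = 1 := by linarith
    subst ha1
    simp
  have hbI : b < 1 := by linarith
  have h1b : 1 - b = a := by linarith
  set t := a • t₀ + b • t₁ with htdef
  have htI : t ∈ I := hIconv ht₀ ht₁ ha hb hab
  -- key pointwise inequality
  have hyp : ∀ x y : Fin n → ℝ,
      ENNReal.ofReal (Real.exp (-φ (t₀, x))) ^ (1 - b)
        * ENNReal.ofReal (Real.exp (-φ (t₁, y))) ^ b
      ≤ ENNReal.ofReal (Real.exp (-φ (t, (1 - b) • x + b • y))) := by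
    intro x y
    have hconv := hφ.2 (Set.mk_mem_prod ht₀ (mem_univ x)) (Set.mk_mem_prod ht₁ (mem_univ y))
      ha hb hab
    have hpt : a • ((t₀, x) : ℝ × (Fin n → ℝ)) + b • (t₁, y) = (t, a • x + b • y) := by
      simp [Prod.smul_mk, Prod.mk_add_mk, htdef]
    rw [hpt] at hconv
    have hexp : Real.exp (-φ (t₀, x)) ^ a * Real.exp (-φ (t₁, y)) ^ b
        ≤ Real.exp (-φ (t, a • x + b • y)) := by
      rw [Real.rpow_def_of_pos (Real.exp_pos _), Real.rpow_def_of_pos (Real.exp_pos _),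
        Real.log_exp, Real.log_exp, ← Real.exp_add]
      refine Real.exp_le_exp.mpr ?_
      simp only [smul_eq_mul] at hconv
      linarith
    rw [h1b]
    calc ENNReal.ofReal (Real.exp (-φ (t₀, x))) ^ a
          * ENNReal.ofReal (Real.exp (-φ (t₁, y))) ^ b
        = ENNReal.ofReal (Real.exp (-φ (t₀, x)) ^ a * Real.exp (-φ (t₁, y)) ^ b) := by
          rw [ENNReal.ofReal_mul (Real.rpow_nonneg (Real.exp_pos _).le _),
            ENNReal.ofReal_rpow_of_pos (Real.exp_pos _),
            ENNReal.ofReal_rpow_of_pos (Real.exp_pos _)]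
      _ ≤ ENNReal.ofReal (Real.exp (-φ (t, a • x + b • y))) := ENNReal.ofReal_le_ofReal hexp
  have key := PL_pi n hb0 hbI (hmeas t₀ ht₀) (hmeas t₁ ht₁) (hmeas t htI) hyp
  rw [hlint t₀ ht₀, hlint t₁ ht₁, hlint t htI, h1b] at key
  have hF₀ := hpos t₀ ht₀
  have hF₁ := hpos t₁ ht₁
  have hFt := hpos t htI
  have hreal : F t₀ ^ a * F t₁ ^ b ≤ F t := by
    rw [← ENNReal.ofReal_le_ofReal_iff hFt.le]
    calc ENNReal.ofReal (F t₀ ^ a * F t₁ ^ b)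
        = ENNReal.ofReal (F t₀) ^ a * ENNReal.ofReal (F t₁) ^ b := by
          rw [ENNReal.ofReal_mul (Real.rpow_nonneg hF₀.le _),
            ENNReal.ofReal_rpow_of_pos hF₀, ENNReal.ofReal_rpow_of_pos hF₁]
      _ ≤ ENNReal.ofReal (F t) := key
  have hlog : a * Real.log (F t₀) + b * Real.log (F t₁) ≤ Real.log (F t) := by
    have h1 : Real.log (F t₀ ^ a * F t₁ ^ b) ≤ Real.log (F t) :=
      Real.log_le_log (by positivity) hreal
    rwa [Real.log_mul (by positivity) (by positivity),
      Real.log_rpow hF₀, Real.log_rpow hF₁] at h1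
  show -Real.log (F t) ≤ a • (-Real.log (F t₀)) + b • (-Real.log (F t₁))
  simp only [smul_eq_mul, mul_neg]
  linarith
end
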